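/- Let A₁,…,A_n be d×d real matrices, let m > 0, 0 < h ≤ m, σ_h ∈ ℝ, and let ‖·‖₁,…,‖·‖_n be norms on ℝ^d forming an extremal multinorm datum for the h-discretization with value σ_h. Set c = max_{j=1,…,n} ‖(A_j − σ_h I)²‖_j (operator norms induced by the respective ‖·‖_j), assume c·h² < 8, and assume moreover that e^{σ_h m} ≤ 1 − c h²/8. Then every trajectory x of the switched system for {A₁,…,A_n} with dwell time at least m is bounded: sup_{t ≥ 0} ‖x(t)‖ < ∞ for any norm ‖·‖ on ℝ^d. -/

import Mathlib

set_option synthInstance.maxHeartbeats 1000000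
set_option maxHeartbeats 1000000
set_option linter.unusedVariables false

open NormedSpace

/-- `N` is a norm on `ℝ^d`: subadditive, absolutely homogeneous, and definite. -/
def IsNorm {d : ℕ} (N : (Fin d → ℝ) → ℝ) : Prop :=
  (∀ x y, N (x + y) ≤ N x + N y) ∧
  (∀ (c : ℝ) (x), N (c • x) = |c| * N x) ∧
  (∀ x, N x = 0 → x = 0)

/-- The operator norm of the matrix `M`, induced by the norm `N` on `ℝ^d`:
`sup { N (M x) : N x ≤ 1 }`. -/
noncomputable def opNorm {d : ℕ} (N : (Fin d → ℝ) → ℝ) (M : Matrix (Fin d) (Fin d) ℝ) : ℝ :=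
  sSup {r : ℝ | ∃ x, N x ≤ 1 ∧ r = N (M.mulVec x)}

/-- `x : ℝ → ℝ^d` is a trajectory of the switched system for the matrices `A j` with dwell
time at least `m`: there are switching times `0 = t 0 < t 1 < ⋯` (a finite or infinite
strictly increasing sequence, consecutive gaps at least `m`, tending to `∞` if infinite,
the last interval being `[t N, ∞)` if finite) and modes `j 0, j 1, …` with
`j (k+1) ≠ j k`, such that on each switching interval
`x s = e^{(s − t k) A (j k)} (x (t k))`. -/
def IsDwellTrajectory {d n : ℕ} (A : Fin n → Matrix (Fin d) (Fin d) ℝ) (m : ℝ)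
    (x : ℝ → (Fin d → ℝ)) : Prop :=
  (∃ (N : ℕ) (t : ℕ → ℝ) (j : ℕ → Fin n),
    t 0 = 0 ∧
    (∀ k < N, m ≤ t (k + 1) - t k) ∧
    (∀ k < N, j (k + 1) ≠ j k) ∧
    (∀ k < N, ∀ s ∈ Set.Icc (t k) (t (k + 1)),
      x s = (NormedSpace.exp ((s - t k) • A (j k))).mulVec (x (t k))) ∧
    (∀ s : ℝ, t N ≤ s →
      x s = (NormedSpace.exp ((s - t N) • A (j N))).mulVec (x (t N)))) ∨
  (∃ (t : ℕ → ℝ) (j : ℕ → Fin n),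
    t 0 = 0 ∧
    (∀ k : ℕ, m ≤ t (k + 1) - t k) ∧
    Filter.Tendsto t Filter.atTop Filter.atTop ∧
    (∀ k : ℕ, j (k + 1) ≠ j k) ∧
    (∀ k : ℕ, ∀ s ∈ Set.Icc (t k) (t (k + 1)),
      x s = (NormedSpace.exp ((s - t k) • A (j k))).mulVec (x (t k))))


variable {d : ℕ} {N : (Fin d → ℝ) → ℝ}

theorem IsNorm.zero (hN : IsNorm N) : N 0 = 0 := by
  have := hN.2.1 0 0
  simpa using this

theorem IsNorm.nonneg (hN : IsNorm N) (x : Fin d → ℝ) : 0 ≤ N x := by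
  have h1 := hN.1 x (-x)
  have h2 : N (-x) = N x := by
    have := hN.2.1 (-1) x
    simpa using this
  have h0 : N (x + -x) = 0 := by simpa using hN.zero
  nlinarith [h1, h2, h0]

def WithNorm (d : ℕ) (N : (Fin d → ℝ) → ℝ) : Type := Fin d → ℝ

instance : AddCommGroup (WithNorm d N) := inferInstanceAs (AddCommGroup (Fin d → ℝ))
noncomputable instance : Module ℝ (WithNorm d N) := inferInstanceAs (Module ℝ (Fin d → ℝ))
instance : FiniteDimensional ℝ (WithNorm d N) :=
  inferInstanceAs (FiniteDimensional ℝ (Fin d → ℝ))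

noncomputable abbrev IsNorm.ngroup (hN : IsNorm N) : NormedAddCommGroup (WithNorm d N) :=
  AddGroupNorm.toNormedAddCommGroup
    { toFun := N
      map_zero' := hN.zero
      add_le' := hN.1
      neg' := fun x => by
        have h := hN.2.1 (-1) x
        simp only [abs_neg, abs_one, one_mul] at h
        rw [← h]
        congr 1
        exact (neg_one_smul ℝ (x : Fin d → ℝ)).symm
      eq_zero_of_map_eq_zero' := fun x hx => hN.2.2 x hx }

noncomputable abbrev IsNorm.nspace (hN : IsNorm N) :
    @NormedSpace ℝ (WithNorm d N) _ hN.ngroup.toSeminormedAddCommGroup :=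
  letI := hN.ngroup
  { toModule := inferInstanceAs (Module ℝ (WithNorm d N))
    norm_smul_le := fun c x => le_of_eq (hN.2.1 c x) }

theorem IsNorm.norm_eq (hN : IsNorm N) (x : WithNorm d N) :
    @norm _ hN.ngroup.toNorm x = N x := rfl


open NormedSpace in
theorem IsNorm.compare {d : ℕ} {N₁ N₂ : (Fin d → ℝ) → ℝ}
    (h₁ : IsNorm N₁) (h₂ : IsNorm N₂) :
    ∃ C : ℝ, 0 ≤ C ∧ ∀ y, N₂ y ≤ C * N₁ y := by
  letI := h₁.ngroup
  letI := h₁.nspace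
  letI := h₂.ngroup
  letI := h₂.nspace
  let L : WithNorm d N₁ →ₗ[ℝ] WithNorm d N₂ :=
    { toFun := fun y => (y : Fin d → ℝ)
      map_add' := fun _ _ => rfl
      map_smul' := fun _ _ => rfl }
  let T := LinearMap.toContinuousLinearMap L
  refine ⟨‖T‖, norm_nonneg _, fun y => ?_⟩
  have := T.le_opNorm (y : WithNorm d N₁)
  exact this

theorem opNorm_facts {d : ℕ} {N : (Fin d → ℝ) → ℝ} (hN : IsNorm N)
    (M : Matrix (Fin d) (Fin d) ℝ) :
    0 ≤ opNorm N M ∧ (∀ x, N (M.mulVec x) ≤ opNorm N M * N x) ∧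
      (∀ b : ℝ, 0 ≤ b → (∀ x, N (M.mulVec x) ≤ b * N x) → opNorm N M ≤ b) := by
  letI := hN.ngroup
  letI := hN.nspace
  set S : Set ℝ := {r : ℝ | ∃ x, N x ≤ 1 ∧ r = N (M.mulVec x)} with hS
  have hzero : (0 : ℝ) ∈ S := ⟨0, by simp [hN.zero], by simp [Matrix.mulVec_zero, hN.zero]⟩
  let T : WithNorm d N →L[ℝ] WithNorm d N := LinearMap.toContinuousLinearMap
    ((Matrix.mulVecLin M : (Fin d → ℝ) →ₗ[ℝ] (Fin d → ℝ)) :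
      WithNorm d N →ₗ[ℝ] WithNorm d N)
  have hTle : ∀ x : Fin d → ℝ, N (M.mulVec x) ≤ ‖T‖ * N x := fun x =>
    T.le_opNorm (x : WithNorm d N)
  have hbdd : BddAbove S := by
    refine ⟨‖T‖, fun r hr => ?_⟩
    obtain ⟨x, hx1, rfl⟩ := hr
    calc N (M.mulVec x) ≤ ‖T‖ * N x := hTle x
      _ ≤ ‖T‖ * 1 := by gcongr
      _ = ‖T‖ := mul_one _
  have hop0 : 0 ≤ opNorm N M := le_csSup hbdd hzero
  refine ⟨hop0, fun x => ?_, fun b hb0 hb => csSup_le ⟨0, hzero⟩ ?_⟩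
  · rcases eq_or_lt_of_le (hN.nonneg x) with h0 | hpos
    · have hx0 : x = 0 := hN.2.2 x h0.symm
      simp [hx0, Matrix.mulVec_zero, hN.zero, ← h0]
    · have hy : N ((N x)⁻¹ • x) = 1 := by
        rw [hN.2.1, abs_of_pos (inv_pos.2 hpos), inv_mul_cancel₀ hpos.ne']
      have hmem : N (M.mulVec ((N x)⁻¹ • x)) ∈ S := ⟨_, le_of_eq hy, rfl⟩
      have hle := le_csSup hbdd hmem
      rw [Matrix.mulVec_smul, hN.2.1, abs_of_pos (inv_pos.2 hpos)] at hle
      have := mul_le_mul_of_nonneg_right hle (le_of_lt hpos)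
      rwa [mul_comm (N x)⁻¹ _, mul_assoc, inv_mul_cancel₀ hpos.ne', mul_one] at this
  · rintro r ⟨x, hx1, rfl⟩
    calc N (M.mulVec x) ≤ b * N x := hb x
      _ ≤ b * 1 := by gcongr
      _ = b := mul_one b

open NormedSpace intervalIntegral in
theorem exp_interp_bound {𝔸 : Type*} [NormedRing 𝔸] [NormedAlgebra ℝ 𝔸] [CompleteSpace 𝔸]
    (B : 𝔸) (h c' : ℝ) (hh : 0 < h) (hc' : 0 ≤ c') (hch : c' * h ^ 2 < 8)
    (hone : ‖(1 : 𝔸)‖ ≤ 1) (hexp1 : ‖exp (h • B)‖ ≤ 1)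
    (hB2 : ‖B ^ 2‖ ≤ c') :
    ∀ τ ∈ Set.Icc (0:ℝ) h, ‖exp (τ • B)‖ ≤ (1 - c' * h ^ 2 / 8)⁻¹ := by
  letI : NormedAlgebra ℚ 𝔸 := NormedAlgebra.restrictScalars ℚ ℝ 𝔸
  set f : ℝ → 𝔸 := fun s => exp (s • B) with hf
  have hfc : Continuous f := exp_continuous.comp (continuous_id.smul continuous_const)
  set u : ℝ → 𝔸 := fun s => B ^ 2 * f s with hu
  have huc : Continuous u := continuous_const.mul hfc
  have hsuc : Continuous fun s => s • u s := continuous_id.smul huc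
  have hfd : ∀ s : ℝ, HasDerivAt f (B * f s) s := fun s => hasDerivAt_exp_smul_const' B s
  have hgd : ∀ s : ℝ, HasDerivAt (fun t => B * f t) (u s) s := fun s => by
    simpa [hu, pow_two, mul_assoc] using (hfd s).const_mul B
  -- the sup K of ‖f‖ on [0, h]
  set K := sSup ((fun s => ‖f s‖) '' Set.Icc 0 h) with hK
  have hKbdd : BddAbove ((fun s => ‖f s‖) '' Set.Icc 0 h) :=
    (isCompact_Icc.image (continuous_norm.comp hfc)).bddAbove
  have hKmem : ∀ s ∈ Set.Icc (0:ℝ) h, ‖f s‖ ≤ K := fun s hs => le_csSup hKbdd ⟨s, hs, rfl⟩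
  have hK0 : 0 ≤ K := le_trans (norm_nonneg (f 0)) (hKmem 0 ⟨le_refl 0, hh.le⟩)
  have hcK : 0 ≤ c' * K := mul_nonneg hc' hK0
  have huK : ∀ s ∈ Set.Icc (0:ℝ) h, ‖u s‖ ≤ c' * K := fun s hs =>
    le_trans (norm_mul_le _ _) (mul_le_mul hB2 (hKmem s hs) (norm_nonneg _) hc')
  -- FTC : ∫₀^τ u = B * f τ - B
  have hG : ∀ τ : ℝ, ∫ s in (0:ℝ)..τ, u s = B * f τ - B := fun τ => by
    have := integral_eq_sub_of_hasDerivAt (f := fun t => B * f t) (f' := u)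
      (fun s _ => hgd s) (huc.intervalIntegrable 0 τ)
    simpa [hf, zero_smul, exp_zero] using this
  -- Φ and its derivative
  set Φ : ℝ → 𝔸 := fun τ => τ • (∫ s in (0:ℝ)..τ, u s) - ∫ s in (0:ℝ)..τ, s • u s with hΦ
  have hΦd : ∀ τ : ℝ, HasDerivAt Φ (∫ s in (0:ℝ)..τ, u s) τ := fun τ => by
    have h1 : HasDerivAt (fun t : ℝ => ∫ s in (0:ℝ)..t, u s) (u τ) τ :=
      (huc.integral_hasStrictDerivAt 0 τ).hasDerivAt
    have h2 := (hasDerivAt_id τ).smul h1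
    have h3 : HasDerivAt (fun t : ℝ => ∫ s in (0:ℝ)..t, s • u s) (τ • u τ) τ :=
      (hsuc.integral_hasStrictDerivAt 0 τ).hasDerivAt
    exact (h2.sub h3).congr_deriv (by simp)
  -- first order Taylor with Φ as remainder
  have hT1 : ∀ τ : ℝ, f τ = 1 + τ • B + Φ τ := by
    intro τ
    have hFd : ∀ s : ℝ, HasDerivAt (fun t => f t - t • B - Φ t) 0 s := fun s => by
      have h5 := ((hfd s).sub ((hasDerivAt_id s).smul_const B)).sub (hΦd s)
      rw [hG s] at h5
      exact h5.congr_deriv (by simp)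
    have h6 := integral_eq_sub_of_hasDerivAt (f := fun t => f t - t • B - Φ t)
      (f' := fun _ => 0) (fun s _ => hFd s) (continuous_const.intervalIntegrable 0 τ)
    have h7 : f τ - τ • B - Φ τ = f 0 - (0:ℝ) • B - Φ 0 := by
      have : (∫ _ in (0:ℝ)..τ, (0:𝔸)) = 0 := by simp
      rw [this] at h6
      exact (sub_eq_zero.mp h6.symm)
    have h8 : f 0 - (0:ℝ) • B - Φ 0 = 1 := by simp [hf, hΦ, zero_smul, exp_zero]
    rw [h8] at h7
    have := sub_eq_iff_eq_add.mp (sub_eq_iff_eq_add.mp h7)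
    rw [this]; abel
  -- kernel form of Φ
  have hΦker : ∀ τ : ℝ, Φ τ = ∫ s in (0:ℝ)..τ, (τ - s) • u s := fun τ => by
    have : ∀ s : ℝ, (τ - s) • u s = τ • u s - s • u s := fun s => sub_smul τ s (u s)
    rw [hΦ]
    simp only [this]
    rw [integral_sub (f := fun s => τ • u s) (g := fun s => s • u s) ((continuous_const.smul huc).intervalIntegrable 0 τ)
      (hsuc.intervalIntegrable 0 τ), integral_smul]
  -- main estimate
  have hint1 : ∀ a b : ℝ, IntervalIntegrable (fun s => (h - s) • u s) MeasureTheory.volume a b :=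
    fun a b => ((continuous_const.sub continuous_id).smul huc).intervalIntegrable a b
  have hmain : ∀ τ ∈ Set.Icc (0:ℝ) h, ‖f τ‖ ≤ 1 + c' * K * h ^ 2 / 8 := by
    rintro τ ⟨hτ0, hτh⟩
    have hτh1 : τ / h ≤ 1 := (div_le_one hh).mpr hτh
    have hτh0 : 0 ≤ τ / h := div_nonneg hτ0 hh.le
    have hcoef : f τ = (1 - τ/h) • (1:𝔸) + (τ/h) • f h + (Φ τ - (τ/h) • Φ h) := by
      rw [hT1 τ, hT1 h]
      have hτhh : τ/h * h = τ := div_mul_cancel₀ τ hh.ne'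
      match_scalars <;> field_simp <;> ring
    have hsplit : Φ h = (∫ s in (0:ℝ)..τ, (h - s) • u s) + ∫ s in τ..h, (h - s) • u s := by
      rw [hΦker h, ← integral_add_adjacent_intervals (hint1 0 τ) (hint1 τ h)]
    have hE2 : Φ τ - (τ/h) • Φ h =
        (∫ s in (0:ℝ)..τ, ((τ/h - 1) * s) • u s) - (τ/h) • ∫ s in τ..h, (h - s) • u s := by
      rw [hΦker τ, hsplit, smul_add]
      have h9 : (∫ s in (0:ℝ)..τ, (τ - s) • u s) - (τ/h) • ∫ s in (0:ℝ)..τ, (h - s) • u s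
           = ∫ s in (0:ℝ)..τ, ((τ/h - 1) * s) • u s := by
        have i1 : IntervalIntegrable (fun s : ℝ => (τ - s) • u s) MeasureTheory.volume 0 τ := by
          exact ((continuous_const.sub continuous_id).smul huc).intervalIntegrable 0 τ
        have i2 : IntervalIntegrable (fun s : ℝ => (τ/h) • ((h - s) • u s))
            MeasureTheory.volume 0 τ := by
          exact (continuous_const.smul ((continuous_const.sub continuous_id).smul huc)).intervalIntegrable 0 τ
        rw [← integral_smul, ← integral_sub i1 i2]
        apply integral_congr
        intro s _
        dsimp only
        rw [smul_smul, ← sub_smul]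
        congr 1
        field_simp
        ring
      rw [← h9]
      abel
    have hsub1 : Set.Icc (0:ℝ) τ ⊆ Set.Icc (0:ℝ) h := Set.Icc_subset_Icc le_rfl hτh
    have hsub2 : Set.Icc τ h ⊆ Set.Icc (0:ℝ) h := Set.Icc_subset_Icc hτ0 le_rfl
    have hb1 : ‖∫ s in (0:ℝ)..τ, ((τ/h - 1) * s) • u s‖
        ≤ (1 - τ/h) * (c' * K) * (τ^2/2) := by
      have hptw : ∀ s ∈ Set.Icc (0:ℝ) τ, ‖((τ/h - 1) * s) • u s‖
          ≤ ((1 - τ/h) * (c' * K)) * s := by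
        intro s hs
        have he : ‖((τ/h - 1) * s) • u s‖ = (1 - τ/h) * s * ‖u s‖ := by
          rw [norm_smul, Real.norm_eq_abs, abs_mul, abs_of_nonpos (by linarith : τ/h - 1 ≤ 0),
            abs_of_nonneg hs.1]
          ring
        rw [he]
        have h15 := huK s (hsub1 hs)
        have h14 : 0 ≤ (1 - τ/h) * s := mul_nonneg (by linarith) hs.1
        calc (1 - τ/h) * s * ‖u s‖ = ((1 - τ/h) * s) * ‖u s‖ := by ring
          _ ≤ ((1 - τ/h) * s) * (c' * K) := mul_le_mul_of_nonneg_left h15 h14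
          _ = ((1 - τ/h) * (c' * K)) * s := by ring
      calc ‖∫ s in (0:ℝ)..τ, ((τ/h - 1) * s) • u s‖
          ≤ ∫ s in (0:ℝ)..τ, ‖((τ/h - 1) * s) • u s‖ := norm_integral_le_integral_norm hτ0
        _ ≤ ∫ s in (0:ℝ)..τ, ((1 - τ/h) * (c' * K)) * s := by
            apply integral_mono_on hτ0
              ((continuous_norm.comp ((continuous_const.mul continuous_id).smul huc)).intervalIntegrable 0 τ)
              ((continuous_const.mul continuous_id).intervalIntegrable 0 τ) hptw
        _ = (1 - τ/h) * (c' * K) * (τ^2/2) := by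
            rw [integral_const_mul, integral_id]
            ring
    have hb2 : ‖∫ s in τ..h, (h - s) • u s‖ ≤ (c' * K) * ((h - τ)^2/2) := by
      have hptw : ∀ s ∈ Set.Icc τ h, ‖(h - s) • u s‖ ≤ (c' * K) * (h - s) := by
        intro s hs
        rw [norm_smul, Real.norm_eq_abs, abs_of_nonneg (by linarith [hs.2] : (0:ℝ) ≤ h - s)]
        have h15 := huK s (hsub2 hs)
        have h11 : 0 ≤ h - s := by linarith [hs.2]
        calc (h - s) * ‖u s‖ ≤ (h - s) * (c' * K) := mul_le_mul_of_nonneg_left h15 h11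
          _ = (c' * K) * (h - s) := mul_comm _ _
      calc ‖∫ s in τ..h, (h - s) • u s‖
          ≤ ∫ s in τ..h, ‖(h - s) • u s‖ := norm_integral_le_integral_norm hτh
        _ ≤ ∫ s in τ..h, (c' * K) * (h - s) := by
            apply integral_mono_on hτh
              ((continuous_norm.comp ((continuous_const.sub continuous_id).smul huc)).intervalIntegrable τ h)
              ((continuous_const.mul (continuous_const.sub continuous_id)).intervalIntegrable τ h) hptw
        _ = (c' * K) * ((h - τ)^2/2) := by
            rw [integral_const_mul]
            have i4 : IntervalIntegrable (fun s : ℝ => s) MeasureTheory.volume τ h := by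
              exact continuous_id.intervalIntegrable τ h
            have h16 : (∫ s in τ..h, (h - s)) = (h - τ)^2/2 := by
              rw [integral_sub (intervalIntegrable_const) i4, integral_id, integral_const]
              simp only [smul_eq_mul]
              ring
            rw [h16]
    have hEb : ‖Φ τ - (τ/h) • Φ h‖ ≤ c' * K * h ^ 2 / 8 := by
      rw [hE2]
      have h12 := norm_sub_le (∫ s in (0:ℝ)..τ, ((τ/h - 1) * s) • u s)
        ((τ/h) • ∫ s in τ..h, (h - s) • u s)
      have h13 : ‖(τ/h) • ∫ s in τ..h, (h - s) • u s‖
          ≤ (τ/h) * ((c' * K) * ((h - τ)^2/2)) := by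
        rw [norm_smul, Real.norm_eq_abs, abs_of_nonneg hτh0]
        exact mul_le_mul_of_nonneg_left hb2 hτh0
      have hid : (1 - τ/h) * (c' * K) * (τ^2/2) + (τ/h) * ((c' * K) * ((h - τ)^2/2))
          = c' * K * (τ * (h - τ) / 2) := by
        field_simp
        ring
      have hquarter : τ * (h - τ) ≤ h^2/4 := by nlinarith [sq_nonneg (τ - h/2)]
      have : c' * K * (τ * (h - τ) / 2) ≤ c' * K * h ^ 2 / 8 := by nlinarith
      linarith [h12, hb1, h13, hid.le, hid.ge]
    calc ‖f τ‖ = ‖(1 - τ/h) • (1:𝔸) + (τ/h) • f h + (Φ τ - (τ/h) • Φ h)‖ := by rw [← hcoef]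
      _ ≤ ‖(1 - τ/h) • (1:𝔸) + (τ/h) • f h‖ + ‖Φ τ - (τ/h) • Φ h‖ := norm_add_le _ _
      _ ≤ (‖(1 - τ/h) • (1:𝔸)‖ + ‖(τ/h) • f h‖) + (c' * K * h ^ 2 / 8) := by
          gcongr
          exact norm_add_le _ _
      _ ≤ ((1 - τ/h) * 1 + (τ/h) * 1) + c' * K * h ^ 2 / 8 := by
          gcongr ?_ + ?_ + _
          · rw [norm_smul, Real.norm_eq_abs, abs_of_nonneg (by linarith : (0:ℝ) ≤ 1 - τ/h)]
            exact mul_le_mul_of_nonneg_left hone (by linarith)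
          · rw [norm_smul, Real.norm_eq_abs, abs_of_nonneg hτh0]
            exact mul_le_mul_of_nonneg_left hexp1 hτh0
      _ = 1 + c' * K * h ^ 2 / 8 := by ring
  have hKle : K ≤ 1 + c' * K * h ^ 2 / 8 := by
    have hne : ((fun s => ‖f s‖) '' Set.Icc 0 h).Nonempty :=
      ⟨‖f 0‖, ⟨0, ⟨le_refl 0, hh.le⟩, rfl⟩⟩
    refine csSup_le hne ?_
    rintro r ⟨s, hs, rfl⟩
    exact hmain s hs
  have hden : 0 < 1 - c' * h ^ 2 / 8 := by nlinarith
  have hKfin : K ≤ (1 - c' * h ^ 2 / 8)⁻¹ := by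
    have h2 : K * (1 - c' * h ^ 2 / 8) ≤ 1 := by nlinarith
    calc K = K * (1 - c' * h ^ 2 / 8) / (1 - c' * h ^ 2 / 8) := by
          rw [mul_div_assoc, div_self hden.ne', mul_one]
      _ ≤ 1 / (1 - c' * h ^ 2 / 8) := by gcongr
      _ = (1 - c' * h ^ 2 / 8)⁻¹ := one_div _
  intro τ hτ
  exact (hKmem τ hτ).trans hKfin

open NormedSpace in
theorem isNorm_exp_bound {d : ℕ} {N : (Fin d → ℝ) → ℝ} (hN : IsNorm N)
    (A : Matrix (Fin d) (Fin d) ℝ) (h σ c' : ℝ) (hh : 0 < h) (hσ : σ ≤ 0)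
    (hc' : 0 ≤ c') (hch : c' * h ^ 2 < 8)
    (hyp1 : ∀ x, N ((exp (h • A)).mulVec x) ≤ Real.exp (σ * h) * N x)
    (hyp2 : ∀ x, N (((A - σ • 1) ^ 2).mulVec x) ≤ c' * N x) :
    ∀ τ, 0 ≤ τ → τ ≤ h → ∀ x,
      N ((exp (τ • A)).mulVec x) ≤ (1 - c' * h ^ 2 / 8)⁻¹ * N x := by
  letI := hN.ngroup
  letI := hN.nspace
  letI : CompleteSpace (WithNorm d N) := FiniteDimensional.complete ℝ _
  letI : NormedAlgebra ℚ (WithNorm d N →L[ℝ] WithNorm d N) := NormedAlgebra.restrictScalars ℚ ℝ _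
  let πlin : Matrix (Fin d) (Fin d) ℝ →ₗ[ℝ] (WithNorm d N →L[ℝ] WithNorm d N) :=
    { toFun := fun M => LinearMap.toContinuousLinearMap
        ((Matrix.mulVecLin M : (Fin d → ℝ) →ₗ[ℝ] (Fin d → ℝ)) : WithNorm d N →ₗ[ℝ] WithNorm d N)
      map_add' := fun M₁ M₂ => ContinuousLinearMap.ext fun x => Matrix.add_mulVec M₁ M₂ x
      map_smul' := fun r M => ContinuousLinearMap.ext fun x => Matrix.smul_mulVec r M x }
  let π : Matrix (Fin d) (Fin d) ℝ →ₐ[ℝ] (WithNorm d N →L[ℝ] WithNorm d N) :=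
    AlgHom.ofLinearMap πlin
      (ContinuousLinearMap.ext fun x => Matrix.one_mulVec x)
      (fun M₁ M₂ => ContinuousLinearMap.ext fun x => (Matrix.mulVec_mulVec x M₁ M₂).symm)
  have hπcont : Continuous π := π.toLinearMap.continuous_of_finiteDimensional
  have hπexp : ∀ M : Matrix (Fin d) (Fin d) ℝ, π (exp M) = exp (π M) := by
    intro M
    letI : SeminormedRing (Matrix (Fin d) (Fin d) ℝ) := Matrix.linftyOpSemiNormedRing
    letI : NormedRing (Matrix (Fin d) (Fin d) ℝ) := Matrix.linftyOpNormedRing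
    letI : NormedAlgebra ℝ (Matrix (Fin d) (Fin d) ℝ) := Matrix.linftyOpNormedAlgebra
    letI : NormedAlgebra ℚ (Matrix (Fin d) (Fin d) ℝ) := NormedAlgebra.restrictScalars ℚ ℝ _
    exact map_exp π hπcont M
  have hπapp : ∀ (M : Matrix (Fin d) (Fin d) ℝ) (x : Fin d → ℝ), π M x = M.mulVec x :=
    fun M x => rfl
  set Bm : Matrix (Fin d) (Fin d) ℝ := A - σ • 1 with hBm
  have hscalar : ∀ r : ℝ, exp (r • (1 : WithNorm d N →L[ℝ] WithNorm d N)) = Real.exp r • (1 : WithNorm d N →L[ℝ] WithNorm d N) := by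
    intro r
    rw [← Algebra.algebraMap_eq_smul_one, ← algebraMap_exp_comm, ← Real.exp_eq_exp_ℝ,
      Algebra.algebraMap_eq_smul_one]
  have hsplitτ : ∀ τ : ℝ, exp (τ • π A) = Real.exp (τ * σ) • exp (τ • π Bm) := by
    intro τ
    have hA : A = σ • 1 + Bm := by rw [hBm]; abel
    have h1 : τ • π A = (τ * σ) • (1 : WithNorm d N →L[ℝ] WithNorm d N) + τ • π Bm := by
      nth_rewrite 1 [hA]
      rw [map_add, smul_add, map_smul, map_one, smul_smul]
    rw [h1, exp_add_of_commute (((Commute.one_left (τ • π Bm)).smul_left (τ * σ))),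
      hscalar, smul_mul_assoc, one_mul]
  intro τ hτ0 hτh x
  -- transfer hypotheses to the CLM algebra
  have hBexp_le : ‖exp (h • π Bm)‖ ≤ 1 := by
    apply ContinuousLinearMap.opNorm_le_bound _ zero_le_one
    intro y
    have e1 : exp (h • π Bm) = Real.exp (-(h * σ)) • exp (h • π A) := by
      rw [hsplitτ h, smul_smul, ← Real.exp_add, neg_add_cancel, Real.exp_zero, one_smul]
    have e2 : exp (h • π A) = π (exp (h • A)) := by rw [hπexp, map_smul]
    have e3 : ‖π (exp (h • A)) y‖ ≤ Real.exp (σ * h) * ‖y‖ := hyp1 y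
    rw [e1, e2]
    rw [ContinuousLinearMap.smul_apply, norm_smul, Real.norm_eq_abs,
      abs_of_pos (Real.exp_pos _)]
    calc Real.exp (-(h * σ)) * ‖π (exp (h • A)) y‖
        ≤ Real.exp (-(h * σ)) * (Real.exp (σ * h) * ‖y‖) := by
          exact mul_le_mul_of_nonneg_left e3 (Real.exp_pos _).le
      _ = ‖y‖ := by rw [← mul_assoc, ← Real.exp_add]; ring_nf; simp
      _ ≤ 1 * ‖y‖ := by rw [one_mul]
  have hB2le : ‖(π Bm) ^ 2‖ ≤ c' := by
    rw [← map_pow]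
    apply ContinuousLinearMap.opNorm_le_bound _ hc'
    intro y
    exact hyp2 y
  have hone : ‖(1 : WithNorm d N →L[ℝ] WithNorm d N)‖ ≤ 1 := ContinuousLinearMap.norm_id_le
  have hKb := exp_interp_bound (π Bm) h c' hh hc' hch hone hBexp_le hB2le
  have hK0 : (0:ℝ) ≤ (1 - c' * h ^ 2 / 8)⁻¹ := by
    have : 0 < 1 - c' * h ^ 2 / 8 := by nlinarith
    positivity
  have e2 : exp (τ • π A) = π (exp (τ • A)) := by rw [hπexp, map_smul]
  have key : N ((exp (τ • A)).mulVec x) = ‖π (exp (τ • A)) (id x : WithNorm d N)‖ := rfl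
  rw [key, ← e2, hsplitτ τ, ContinuousLinearMap.smul_apply, norm_smul, Real.norm_eq_abs,
    abs_of_pos (Real.exp_pos _)]
  have hexp1 : Real.exp (τ * σ) ≤ 1 :=
    Real.exp_le_one_iff.mpr (mul_nonpos_of_nonneg_of_nonpos hτ0 hσ)
  have hle2 : ‖(exp (τ • π Bm)) x‖ ≤ (1 - c' * h ^ 2 / 8)⁻¹ * N x := by
    have h1 := ContinuousLinearMap.le_opNorm (exp (τ • π Bm)) (x : WithNorm d N)
    have h2 := hKb τ ⟨hτ0, hτh⟩
    exact le_trans h1 (mul_le_mul_of_nonneg_right h2 (hN.nonneg x))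
  calc Real.exp (τ * σ) * ‖(exp (τ • π Bm)) x‖
      ≤ 1 * ((1 - c' * h ^ 2 / 8)⁻¹ * N x) :=
        mul_le_mul hexp1 hle2 (norm_nonneg _) zero_le_one
    _ = (1 - c' * h ^ 2 / 8)⁻¹ * N x := one_mul _

open NormedSpace in
theorem isNorm_exp_crude {d : ℕ} {N : (Fin d → ℝ) → ℝ} (hN : IsNorm N)
    (A : Matrix (Fin d) (Fin d) ℝ) (m : ℝ) :
    ∃ L : ℝ, 0 ≤ L ∧ ∀ τ, 0 ≤ τ → τ ≤ m → ∀ x,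
      N ((exp (τ • A)).mulVec x) ≤ L * N x := by
  letI := hN.ngroup
  letI := hN.nspace
  letI : CompleteSpace (WithNorm d N) := FiniteDimensional.complete ℝ _
  letI : NormedAlgebra ℚ (WithNorm d N →L[ℝ] WithNorm d N) := NormedAlgebra.restrictScalars ℚ ℝ _
  let πlin : Matrix (Fin d) (Fin d) ℝ →ₗ[ℝ] (WithNorm d N →L[ℝ] WithNorm d N) :=
    { toFun := fun M => LinearMap.toContinuousLinearMap
        ((Matrix.mulVecLin M : (Fin d → ℝ) →ₗ[ℝ] (Fin d → ℝ)) : WithNorm d N →ₗ[ℝ] WithNorm d N)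
      map_add' := fun M₁ M₂ => ContinuousLinearMap.ext fun x => Matrix.add_mulVec M₁ M₂ x
      map_smul' := fun r M => ContinuousLinearMap.ext fun x => Matrix.smul_mulVec r M x }
  let π : Matrix (Fin d) (Fin d) ℝ →ₐ[ℝ] (WithNorm d N →L[ℝ] WithNorm d N) :=
    AlgHom.ofLinearMap πlin
      (ContinuousLinearMap.ext fun x => Matrix.one_mulVec x)
      (fun M₁ M₂ => ContinuousLinearMap.ext fun x => (Matrix.mulVec_mulVec x M₁ M₂).symm)
  have hπcont : Continuous π := π.toLinearMap.continuous_of_finiteDimensional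
  have hπexp : ∀ M : Matrix (Fin d) (Fin d) ℝ, π (exp M) = exp (π M) := by
    intro M
    letI : SeminormedRing (Matrix (Fin d) (Fin d) ℝ) := Matrix.linftyOpSemiNormedRing
    letI : NormedRing (Matrix (Fin d) (Fin d) ℝ) := Matrix.linftyOpNormedRing
    letI : NormedAlgebra ℝ (Matrix (Fin d) (Fin d) ℝ) := Matrix.linftyOpNormedAlgebra
    letI : NormedAlgebra ℚ (Matrix (Fin d) (Fin d) ℝ) := NormedAlgebra.restrictScalars ℚ ℝ _
    exact map_exp π hπcont M
  have hcont : Continuous fun τ : ℝ => ‖exp (τ • π A)‖ :=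
    (exp_continuous.comp (continuous_id.smul continuous_const)).norm
  have hbdd : BddAbove ((fun τ : ℝ => ‖exp (τ • π A)‖) '' Set.Icc 0 m) :=
    (isCompact_Icc.image hcont).bddAbove
  set L₀ := sSup ((fun τ : ℝ => ‖exp (τ • π A)‖) '' Set.Icc 0 m) with hL₀
  refine ⟨max L₀ 0, le_max_right _ _, fun τ h0 hm x => ?_⟩
  have hmem : ‖exp (τ • π A)‖ ≤ L₀ := le_csSup hbdd ⟨τ, ⟨h0, hm⟩, rfl⟩
  have key : N ((exp (τ • A)).mulVec x) = ‖π (exp (τ • A)) x‖ := rfl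
  have e2 : π (exp (τ • A)) = exp (τ • π A) := by rw [hπexp, map_smul]
  rw [key, e2]
  have h1 := ContinuousLinearMap.le_opNorm (exp (τ • π A)) (x : WithNorm d N)
  exact le_trans h1
    (mul_le_mul_of_nonneg_right (le_trans hmem (le_max_left _ _)) (hN.nonneg x))

/-- **Sufficient stability condition (Corollary 2).**  If the norms `Nm j` form an
extremal multinorm datum for the `h`-discretization with value `σh`,
`c = max_j ‖(A_j − σh·I)²‖_j` satisfies `c·h² < 8`, and moreover
`e^{σh·m} ≤ 1 − c·h²/8`, then every trajectory of the switched system with dwell time at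
least `m` is bounded in any norm on `ℝ^d`. -/
theorem stability_of_discretization {d n : ℕ} (hn : 0 < n)
    (A : Fin n → Matrix (Fin d) (Fin d) ℝ)
    (m h σh : ℝ) (hm : 0 < m) (hh : 0 < h) (hhm : h ≤ m)
    (Nm : Fin n → (Fin d → ℝ) → ℝ) (hNm : ∀ j, IsNorm (Nm j))
    (hext₁ : ∀ (j : Fin n) (x : Fin d → ℝ),
      Nm j ((NormedSpace.exp (h • A j)).mulVec x) ≤ Real.exp (σh * h) * Nm j x)
    (hext₂ : ∀ (i j : Fin n), i ≠ j → ∀ x : Fin d → ℝ,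
      Nm j ((NormedSpace.exp (m • A j)).mulVec x) ≤ Real.exp (σh * m) * Nm i x)
    (c : ℝ)
    (hc : c = ⨆ j : Fin n, opNorm (Nm j) ((A j - σh • (1 : Matrix (Fin d) (Fin d) ℝ)) ^ 2))
    (hch : c * h ^ 2 < 8)
    (hstab : Real.exp (σh * m) ≤ 1 - c * h ^ 2 / 8) :
    ∀ x : ℝ → (Fin d → ℝ), IsDwellTrajectory A m x →
      ∀ Nn : (Fin d → ℝ) → ℝ, IsNorm Nn →
        ∃ C : ℝ, ∀ s : ℝ, 0 ≤ s → Nn (x s) ≤ C := by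
  classical
  intro x hx Nn hNn
  haveI : Nonempty (Fin n) := ⟨⟨0, hn⟩⟩
  -- facts about c
  have hcj : ∀ j : Fin n, opNorm (Nm j) ((A j - σh • 1) ^ 2) ≤ c := by
    intro j
    rw [hc]
    exact le_ciSup (f := fun j => opNorm (Nm j) ((A j - σh • 1) ^ 2))
      (Set.Finite.bddAbove (Set.finite_range _)) j
  have hc0 : 0 ≤ c :=
    le_trans (opNorm_facts (hNm ⟨0, hn⟩) ((A ⟨0, hn⟩ - σh • 1) ^ 2)).1 (hcj ⟨0, hn⟩)
  have hden : 0 < 1 - c * h ^ 2 / 8 := by nlinarith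
  have hσm1 : Real.exp (σh * m) ≤ 1 := le_trans hstab (by nlinarith)
  have hσ : σh ≤ 0 := by
    have h1 : σh * m ≤ 0 := Real.exp_le_one_iff.mp hσm1
    nlinarith
  have hσh1 : Real.exp (σh * h) ≤ 1 :=
    Real.exp_le_one_iff.mpr (mul_nonpos_of_nonpos_of_nonneg hσ hh.le)
  set K₀ : ℝ := (1 - c * h ^ 2 / 8)⁻¹ with hK₀
  have hK₀0 : 0 ≤ K₀ := by positivity
  have hK₀inv : K₀ * (1 - c * h ^ 2 / 8) = 1 := inv_mul_cancel₀ hden.ne'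
  -- quantitative short-time bound
  have hq : ∀ (j : Fin n) τ, 0 ≤ τ → τ ≤ h → ∀ y,
      Nm j ((exp (τ • A j)).mulVec y) ≤ K₀ * Nm j y := by
    intro j
    refine isNorm_exp_bound (hNm j) (A j) h σh c hh hσ hc0 hch (hext₁ j) ?_
    intro y
    exact le_trans ((opNorm_facts (hNm j) ((A j - σh • 1) ^ 2)).2.1 y)
      (mul_le_mul_of_nonneg_right (hcj j) ((hNm j).nonneg y))
  -- powers of h
  have hpow : ∀ (j : Fin n) (q : ℕ) (y : Fin d → ℝ),
      Nm j ((exp (((q : ℝ) * h) • A j)).mulVec y) ≤ Nm j y := by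
    intro j q
    induction q with
    | zero => intro y; simp [exp_zero, Matrix.one_mulVec]
    | succ q ih =>
      intro y
      have hsum : (((q + 1 : ℕ) : ℝ) * h) • A j = h • A j + ((q : ℝ) * h) • A j := by
        rw [← add_smul]; push_cast; ring_nf
      rw [hsum, Matrix.exp_add_of_commute _ _
        (((Commute.refl (A j)).smul_left h).smul_right ((q : ℝ) * h)),
        ← Matrix.mulVec_mulVec]
      calc Nm j ((exp (h • A j)).mulVec ((exp (((q:ℝ) * h) • A j)).mulVec y))
          ≤ Real.exp (σh * h) * Nm j ((exp (((q:ℝ) * h) • A j)).mulVec y) := hext₁ j _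
        _ ≤ 1 * Nm j y :=
            mul_le_mul hσh1 (ih y) ((hNm j).nonneg _) zero_le_one
        _ = Nm j y := one_mul _
  -- arbitrary nonnegative time bound
  have hA : ∀ (j : Fin n) (τ : ℝ), 0 ≤ τ → ∀ y,
      Nm j ((exp (τ • A j)).mulVec y) ≤ K₀ * Nm j y := by
    intro j τ hτ y
    set q : ℕ := ⌊τ / h⌋₊ with hqdef
    have hq0 : (q : ℝ) * h ≤ τ := by
      have h1 : (q : ℝ) ≤ τ / h := Nat.floor_le (div_nonneg hτ hh.le)
      calc (q : ℝ) * h ≤ (τ / h) * h := mul_le_mul_of_nonneg_right h1 hh.le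
        _ = τ := div_mul_cancel₀ τ hh.ne'
    have hq1 : τ - (q : ℝ) * h ≤ h := by
      have h2 : τ / h < q + 1 := Nat.lt_floor_add_one (τ / h)
      have h3 : τ < ((q : ℝ) + 1) * h := by
        rw [← div_lt_iff₀ hh] at *
        linarith
      linarith
    have hsplit : τ • A j = (τ - (q : ℝ) * h) • A j + ((q : ℝ) * h) • A j := by
      rw [← add_smul]; ring_nf
    rw [hsplit, Matrix.exp_add_of_commute _ _
      (((Commute.refl (A j)).smul_left (τ - (q : ℝ) * h)).smul_right ((q : ℝ) * h)),
      ← Matrix.mulVec_mulVec]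
    calc Nm j ((exp ((τ - (q:ℝ) * h) • A j)).mulVec ((exp (((q:ℝ) * h) • A j)).mulVec y))
        ≤ K₀ * Nm j ((exp (((q:ℝ) * h) • A j)).mulVec y) :=
          hq j (τ - (q:ℝ) * h) (by linarith) hq1 _
      _ ≤ K₀ * Nm j y := mul_le_mul_of_nonneg_left (hpow j q y) hK₀0
  -- across a full dwell interval, with a norm switch
  have hswitch : ∀ (i j : Fin n), i ≠ j → ∀ Δ, m ≤ Δ → ∀ y,
      Nm j ((exp (Δ • A j)).mulVec y) ≤ Nm i y := by
    intro i j hij Δ hΔ y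
    have hsplit : Δ • A j = (Δ - m) • A j + m • A j := by rw [← add_smul]; ring_nf
    rw [hsplit, Matrix.exp_add_of_commute _ _
      (((Commute.refl (A j)).smul_left (Δ - m)).smul_right m), ← Matrix.mulVec_mulVec]
    calc Nm j ((exp ((Δ - m) • A j)).mulVec ((exp (m • A j)).mulVec y))
        ≤ K₀ * Nm j ((exp (m • A j)).mulVec y) := hA j (Δ - m) (by linarith) _
      _ ≤ K₀ * (Real.exp (σh * m) * Nm i y) :=
          mul_le_mul_of_nonneg_left (hext₂ i j hij y) hK₀0
      _ = (K₀ * Real.exp (σh * m)) * Nm i y := by ring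
      _ ≤ 1 * Nm i y := by
          apply mul_le_mul_of_nonneg_right _ ((hNm i).nonneg y)
          calc K₀ * Real.exp (σh * m) ≤ K₀ * (1 - c * h ^ 2 / 8) :=
                mul_le_mul_of_nonneg_left hstab hK₀0
            _ = 1 := hK₀inv
      _ = Nm i y := one_mul _
  -- comparison constants
  obtain ⟨CN, hCNs⟩ : ∃ CN : Fin n → ℝ, ∀ j, 0 ≤ CN j ∧ ∀ y, Nn y ≤ CN j * Nm j y := by
    choose CN hCN using fun j => (hNm j).compare hNn
    exact ⟨CN, hCN⟩
  obtain ⟨Lc, hLcs⟩ : ∃ Lc : Fin n → ℝ, ∀ j, 0 ≤ Lc j ∧ ∀ τ, 0 ≤ τ → τ ≤ m → ∀ y,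
      Nm j ((exp (τ • A j)).mulVec y) ≤ Lc j * Nm j y := by
    choose Lc hLc using fun j => isNorm_exp_crude (hNm j) (A j) m
    exact ⟨Lc, hLc⟩
  obtain ⟨CC, hCCs⟩ : ∃ CC : Fin n × Fin n → ℝ, ∀ p, 0 ≤ CC p ∧ ∀ y,
      Nm p.2 y ≤ CC p * Nm p.1 y := by
    choose CC hCC using fun p : Fin n × Fin n => (hNm p.1).compare (hNm p.2)
    exact ⟨CC, hCC⟩
  set CNM := ⨆ j, CN j with hCNM
  set LM := ⨆ j, Lc j with hLM
  set CCM := ⨆ p, CC p with hCCM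
  set D := ⨆ j, Nm j (x 0) with hD
  have hCNMle : ∀ j, CN j ≤ CNM := fun j =>
    le_ciSup (f := CN) (Set.Finite.bddAbove (Set.finite_range _)) j
  have hLMle : ∀ j, Lc j ≤ LM := fun j =>
    le_ciSup (f := Lc) (Set.Finite.bddAbove (Set.finite_range _)) j
  have hCCMle : ∀ p, CC p ≤ CCM := fun p =>
    le_ciSup (f := CC) (Set.Finite.bddAbove (Set.finite_range _)) p
  have hDle : ∀ j, Nm j (x 0) ≤ D := fun j =>
    le_ciSup (f := fun j => Nm j (x 0)) (Set.Finite.bddAbove (Set.finite_range _)) j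
  have hCNM0 : 0 ≤ CNM := le_trans (hCNs ⟨0, hn⟩).1 (hCNMle _)
  have hLM0 : 0 ≤ LM := le_trans (hLcs ⟨0, hn⟩).1 (hLMle _)
  have hCCM0 : 0 ≤ CCM := le_trans (hCCs (⟨0, hn⟩, ⟨0, hn⟩)).1 (hCCMle _)
  have hD0 : 0 ≤ D := le_trans ((hNm ⟨0, hn⟩).nonneg (x 0)) (hDle _)
  set E1 : ℝ := (1 + LM) * (1 + CCM) with hE1def
  have hE1 : 1 ≤ E1 := by nlinarith
  have hE10 : 0 ≤ E1 := by linarith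
  refine ⟨CNM * (K₀ * E1 * D), ?_⟩
  -- conversion to the final norm
  have hfin : ∀ (jj : Fin n) (v : Fin d → ℝ),
      Nm jj v ≤ K₀ * E1 * D → Nn v ≤ CNM * (K₀ * E1 * D) := by
    intro jj v hv
    calc Nn v ≤ CN jj * Nm jj v := (hCNs jj).2 v
      _ ≤ CNM * (K₀ * E1 * D) :=
          mul_le_mul (hCNMle jj) hv ((hNm jj).nonneg v) hCNM0
  have hKD_E : K₀ * D ≤ K₀ * E1 * D := by
    nlinarith [mul_nonneg (mul_nonneg hK₀0 hD0) (sub_nonneg.mpr hE1)]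
  -- first interval
  have hcase0 : ∀ (j0 : Fin n) (s' : ℝ), 0 ≤ s' →
      x s' = (exp ((s' - 0) • A j0)).mulVec (x 0) → Nn (x s') ≤ CNM * (K₀ * E1 * D) := by
    intro j0 s' hs' hform
    apply hfin j0
    rw [hform]
    calc Nm j0 ((exp ((s' - 0) • A j0)).mulVec (x 0))
        ≤ K₀ * Nm j0 (x 0) := hA j0 (s' - 0) (by linarith) _
      _ ≤ K₀ * D := mul_le_mul_of_nonneg_left (hDle j0) hK₀0
      _ ≤ K₀ * E1 * D := hKD_E
  -- later intervals
  have hcasek : ∀ (tk : ℝ) (jprev jcur : Fin n), jprev ≠ jcur →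
      Nm jprev (x tk) ≤ K₀ * D → ∀ s', tk ≤ s' →
      x s' = (exp ((s' - tk) • A jcur)).mulVec (x tk) →
      Nn (x s') ≤ CNM * (K₀ * E1 * D) := by
    intro tk jprev jcur hne hprev s' hs' hform
    apply hfin jcur
    by_cases hlong : m ≤ s' - tk
    · rw [hform]
      calc Nm jcur ((exp ((s' - tk) • A jcur)).mulVec (x tk))
          ≤ Nm jprev (x tk) := hswitch jprev jcur hne (s' - tk) hlong _
        _ ≤ K₀ * D := hprev
        _ ≤ K₀ * E1 * D := hKD_E
    · push_neg at hlong
      have hcur : Nm jcur (x tk) ≤ CC (jprev, jcur) * (K₀ * D) :=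
        le_trans ((hCCs (jprev, jcur)).2 (x tk))
          (mul_le_mul_of_nonneg_left hprev (hCCs (jprev, jcur)).1)
      rw [hform]
      calc Nm jcur ((exp ((s' - tk) • A jcur)).mulVec (x tk))
          ≤ Lc jcur * Nm jcur (x tk) :=
            (hLcs jcur).2 (s' - tk) (by linarith) hlong.le _
        _ ≤ Lc jcur * (CC (jprev, jcur) * (K₀ * D)) :=
            mul_le_mul_of_nonneg_left hcur (hLcs jcur).1
        _ ≤ (1 + LM) * ((1 + CCM) * (K₀ * D)) := by
            have hn1 : 0 ≤ CC (jprev, jcur) * (K₀ * D) :=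
              mul_nonneg (hCCs (jprev, jcur)).1 (mul_nonneg hK₀0 hD0)
            have hstep : CC (jprev, jcur) * (K₀ * D) ≤ (1 + CCM) * (K₀ * D) :=
              mul_le_mul_of_nonneg_right (le_trans (hCCMle (jprev, jcur)) (by linarith))
                (mul_nonneg hK₀0 hD0)
            exact mul_le_mul (le_trans (hLMle jcur) (by linarith)) hstep hn1 (by linarith)
        _ = K₀ * E1 * D := by rw [hE1def]; ring
  intro s hs
  rcases hx with ⟨NN, tseq, jseq, ht0, hgap, hnej, hIcc, hlast⟩ |
    ⟨tseq, jseq, ht0, hgap, htend, hnej, hIcc⟩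
  · -- finite number of switches
    have hQ : ∀ k, k < NN → Nm (jseq k) (x (tseq (k + 1))) ≤ K₀ * D := by
      intro k
      induction k with
      | zero =>
        intro hk
        have hform := hIcc 0 hk (tseq 1) ⟨by linarith [hgap 0 hk], le_rfl⟩
        rw [hform]
        calc Nm (jseq 0) ((exp ((tseq 1 - tseq 0) • A (jseq 0))).mulVec (x (tseq 0)))
            ≤ K₀ * Nm (jseq 0) (x (tseq 0)) :=
              hA (jseq 0) (tseq 1 - tseq 0) (by linarith [hgap 0 hk]) _
          _ ≤ K₀ * D := by
              rw [ht0]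
              exact mul_le_mul_of_nonneg_left (hDle (jseq 0)) hK₀0
      | succ k ih =>
        intro hk
        have hk' : k < NN := Nat.lt_of_succ_lt hk
        have hform := hIcc (k + 1) hk (tseq (k + 2)) ⟨by linarith [hgap (k+1) hk], le_rfl⟩
        rw [hform]
        calc Nm (jseq (k+1)) ((exp ((tseq (k+2) - tseq (k+1)) • A (jseq (k+1)))).mulVec
              (x (tseq (k+1))))
            ≤ Nm (jseq k) (x (tseq (k+1))) :=
              hswitch (jseq k) (jseq (k+1)) (hnej k hk').symm (tseq (k+2) - tseq (k+1))
                (hgap (k+1) hk) _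
          _ ≤ K₀ * D := ih hk'
    by_cases hsN : tseq NN ≤ s
    · have hform := hlast s hsN
      match NN, hQ, hform, hsN with
      | 0, _, hform, hsN =>
        rw [ht0] at hform hsN
        exact hcase0 (jseq 0) s hs hform
      | (k+1), hQ, hform, hsN =>
        exact hcasek (tseq (k+1)) (jseq k) (jseq (k+1)) (hnej k (Nat.lt_succ_self k)).symm
          (hQ k (Nat.lt_succ_self k)) s hsN hform
    · push_neg at hsN
      set P : ℕ → Prop := fun k => tseq k ≤ s with hP
      have hP0 : P 0 := by show tseq 0 ≤ s; rw [ht0]; exact hs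
      set k := Nat.findGreatest P NN with hkdef
      have hPk : P k := Nat.findGreatest_spec (Nat.zero_le NN) hP0
      have hkN : k ≤ NN := Nat.findGreatest_le NN
      have hkltN : k < NN := by
        rcases eq_or_lt_of_le hkN with heq | hlt
        · exfalso; rw [heq] at hPk; exact absurd hPk (not_le.mpr hsN)
        · exact hlt
      have hs2 : s ≤ tseq (k + 1) := by
        by_contra hcon
        push_neg at hcon
        exact (Nat.findGreatest_is_greatest (Nat.lt_succ_self k) (Nat.succ_le_of_lt hkltN))
          hcon.le
      have hform := hIcc k hkltN s ⟨hPk, hs2⟩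
      match k, hPk, hkltN, hform with
      | 0, hPk, hkltN, hform =>
        rw [ht0] at hform
        exact hcase0 (jseq 0) s hs hform
      | (k'+1), hPk, hkltN, hform =>
        exact hcasek (tseq (k'+1)) (jseq k') (jseq (k'+1))
          (hnej k' (Nat.lt_of_succ_lt hkltN)).symm
          (hQ k' (Nat.lt_of_succ_lt hkltN)) s hPk hform
  · -- infinitely many switches
    have hQ : ∀ k, Nm (jseq k) (x (tseq (k + 1))) ≤ K₀ * D := by
      intro k
      induction k with
      | zero =>
        have hform := hIcc 0 (tseq 1) ⟨by linarith [hgap 0], le_rfl⟩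
        rw [hform]
        calc Nm (jseq 0) ((exp ((tseq 1 - tseq 0) • A (jseq 0))).mulVec (x (tseq 0)))
            ≤ K₀ * Nm (jseq 0) (x (tseq 0)) :=
              hA (jseq 0) (tseq 1 - tseq 0) (by linarith [hgap 0]) _
          _ ≤ K₀ * D := by
              rw [ht0]
              exact mul_le_mul_of_nonneg_left (hDle (jseq 0)) hK₀0
      | succ k ih =>
        have hform := hIcc (k + 1) (tseq (k + 2)) ⟨by linarith [hgap (k+1)], le_rfl⟩
        rw [hform]
        calc Nm (jseq (k+1)) ((exp ((tseq (k+2) - tseq (k+1)) • A (jseq (k+1)))).mulVec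
              (x (tseq (k+1))))
            ≤ Nm (jseq k) (x (tseq (k+1))) :=
              hswitch (jseq k) (jseq (k+1)) (hnej k).symm (tseq (k+2) - tseq (k+1))
                (hgap (k+1)) _
          _ ≤ K₀ * D := ih
    have hex : ∃ K : ℕ, s < tseq K := by
      obtain ⟨K, hK⟩ := (Filter.tendsto_atTop.mp htend (s + 1)).exists
      exact ⟨K, by linarith⟩
    have hk₀pos : Nat.find hex ≠ 0 := by
      intro h0
      have h6 := Nat.find_spec hex
      rw [h0, ht0] at h6
      linarith
    obtain ⟨k, hk⟩ := Nat.exists_eq_succ_of_ne_zero hk₀pos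
    have hk₀spec : s < tseq (k + 1) := by
      have h6 := Nat.find_spec hex
      rwa [hk] at h6
    have htk : tseq k ≤ s := by
      have h5 : k < Nat.find hex := by rw [hk]; exact Nat.lt_succ_self k
      exact not_lt.mp (Nat.find_min hex h5)
    have hform := hIcc k s ⟨htk, hk₀spec.le⟩
    match k, htk, hform with
    | 0, htk, hform =>
      rw [ht0] at hform
      exact hcase0 (jseq 0) s hs hform
    | (k'+1), htk, hform =>
      exact hcasek (tseq (k'+1)) (jseq k') (jseq (k'+1)) (hnej k').symm
        (hQ k') s htk hform
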